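/- For every x ≥ 1, letting t(x) be the unique maximizer in (0,x) of t ↦ τ(x,t), one has α(x) := τ(x, t(x)) < x/(3x+1); in particular α(x) < 1/3. -/

import Mathlib

noncomputable def tau (x t : ℝ) : ℝ := (1/x) * (t - (t + x + 1) * (t/(1+t)) ^ (x+1))

theorem stmt13 : ∀ x : ℝ, 1 ≤ x → ∀ t₀ : ℝ, t₀ ∈ Set.Ioo 0 x →
    deriv (fun t => tau x t) t₀ = 0 →
    tau x t₀ < x/(3*x+1) ∧ tau x t₀ < 1/3 := by
  intro x hx t₀ ht hd
  obtain ⟨ht0, htx⟩ := ht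
  have hx0 : (0:ℝ) < x := by linarith
  have h1t : (0:ℝ) < 1 + t₀ := by linarith
  have hu0 : 0 < t₀ / (1 + t₀) := div_pos ht0 h1t
  -- derivative of t ↦ t/(1+t)
  have hq : HasDerivAt (fun t : ℝ => t / (1 + t)) (1 / (1 + t₀)^2) t₀ := by
    have h := (hasDerivAt_id t₀).div ((hasDerivAt_const t₀ (1:ℝ)).add (hasDerivAt_id t₀))
      (by positivity)
    convert h using 1
    · rfl
    · rfl
    · rfl
    · simp only [Pi.add_apply, id]
      ring
  have hrp : HasDerivAt (fun y : ℝ => y ^ (x+1)) ((x+1) * (t₀/(1+t₀)) ^ x) (t₀/(1+t₀)) := by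
    have := Real.hasDerivAt_rpow_const (x := t₀/(1+t₀)) (p := x+1) (Or.inl (ne_of_gt hu0))
    convert this using 2
    ring
  have hg : HasDerivAt (fun t : ℝ => (t/(1+t)) ^ (x+1))
      ((x+1) * (t₀/(1+t₀)) ^ x * (1 / (1 + t₀)^2)) t₀ := by
    have := hrp.comp t₀ hq; exact this
  have h3 : HasDerivAt (fun t : ℝ => t + x + 1) 1 t₀ := by
    simpa using ((hasDerivAt_id t₀).add_const x).add_const 1
  have h4 : HasDerivAt (fun t : ℝ => (t + x + 1) * (t/(1+t)) ^ (x+1))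
      (1 * (t₀/(1+t₀)) ^ (x+1) + (t₀ + x + 1) * ((x+1) * (t₀/(1+t₀)) ^ x * (1 / (1 + t₀)^2)))
      t₀ := h3.mul hg
  have h5 : HasDerivAt (fun t : ℝ => tau x t)
      ((1/x) * (1 - (1 * (t₀/(1+t₀)) ^ (x+1) + (t₀ + x + 1) * ((x+1) * (t₀/(1+t₀)) ^ x * (1 / (1 + t₀)^2)))))
      t₀ := by
    have := ((hasDerivAt_id t₀).sub h4).const_mul (1/x)
    simpa [tau] using this
  have hd0 : (1/x) * (1 - (1 * (t₀/(1+t₀)) ^ (x+1) + (t₀ + x + 1) * ((x+1) * (t₀/(1+t₀)) ^ x * (1 / (1 + t₀)^2)))) = 0 := by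
    rw [← h5.deriv]; exact hd
  set E : ℝ := (t₀/(1+t₀)) ^ x with hE
  have hEpos : 0 < E := Real.rpow_pos_of_pos hu0 x
  have hsplit : (t₀/(1+t₀)) ^ (x+1) = E * (t₀/(1+t₀)) := by
    rw [hE, Real.rpow_add hu0, Real.rpow_one]
  rw [hsplit] at hd0
  have hxne : (1/x : ℝ) ≠ 0 := by positivity
  have hbr : 1 - (1 * (E * (t₀/(1+t₀))) + (t₀ + x + 1) * ((x+1) * E * (1 / (1 + t₀)^2))) = 0 := by
    have := mul_eq_zero.mp hd0
    rcases this with h | h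
    · exact absurd h hxne
    · exact h
  -- clear denominators: key polynomial identity
  have hkey : E * (t₀ * (1 + t₀) + (x + 1) * (t₀ + x + 1)) = (1 + t₀)^2 := by
    have h1t2 : ((1 + t₀)^2 : ℝ) ≠ 0 := by positivity
    field_simp at hbr
    nlinarith [hbr]
  set D : ℝ := t₀ * (1 + t₀) + (x + 1) * (t₀ + x + 1) with hD
  have hDpos : 0 < D := by nlinarith
  have hEeq : E = (1 + t₀)^2 / D := by
    field_simp
    linarith [hkey]
  have htau : tau x t₀ = t₀ * (x + 1) / D := by
    rw [tau, hsplit, hEeq]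
    rw [hD]
    field_simp
    ring
  have main : tau x t₀ < x/(3*x+1) := by
    rw [htau, div_lt_div_iff₀ hDpos (by linarith : (0:ℝ) < 3*x+1)]
    nlinarith [mul_pos (sub_pos.mpr htx) (by nlinarith : (0:ℝ) < (x+1)^2 - x * t₀)]
  refine ⟨main, lt_trans main ?_⟩
  rw [div_lt_div_iff₀ (by linarith : (0:ℝ) < 3*x+1) (by norm_num : (0:ℝ) < 3)]
  linarith
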